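/- For a composition α of m of length N with all entries even, the cosquare of W_α satisfies W_α^{-T} W_α = -I_m + (2/N) Q_m 𝟙_{m×m}. -/

import Mathlib

open Matrix Finset

/-- The a×a strictly upper triangular matrix with all entries 1 above the diagonal,
viewed here through its m×m block-diagonal placements. -/
def Umat (m : ℕ) : Matrix (Fin m) (Fin m) ℝ :=
  Matrix.of fun i j => if (i : ℕ) < (j : ℕ) then 1 else 0

/-- The m×m diagonal matrix with alternating diagonal entries (+1,-1,+1,...). -/
def Qmat (m : ℕ) : Matrix (Fin m) (Fin m) ℝ :=
  Matrix.diagonal fun i => (-1 : ℝ) ^ (i : ℕ)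

/-- The all-ones m×m matrix. -/
def Jmat (m : ℕ) : Matrix (Fin m) (Fin m) ℝ :=
  Matrix.of fun _ _ => 1

/-- Offset of the i-th block: sum of the sizes of the preceding blocks. -/
def blockOff {N : ℕ} (α : Fin N → ℕ) (i : Fin N) : ℕ :=
  ∑ j ∈ Finset.univ.filter (fun j => j < i), α j

/-- The m×m block diagonal matrix `⊕_{i=1}^N (U_{α_i} - U_{α_i}ᵀ)` (for `m = Σ α_i`):
rows/columns `blockOff α i ≤ r,c < blockOff α i + α i` carry the i-th block
`U_{α_i} - U_{α_i}ᵀ`, whose (p,q) entry is 1 if p < q, -1 if p > q, 0 on the diagonal;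
all entries outside the diagonal blocks vanish. -/
def blockSkew {N : ℕ} (α : Fin N → ℕ) (m : ℕ) : Matrix (Fin m) (Fin m) ℝ :=
  Matrix.of fun r c =>
    if ∃ i : Fin N, blockOff α i ≤ (r : ℕ) ∧ (r : ℕ) < blockOff α i + α i ∧
        blockOff α i ≤ (c : ℕ) ∧ (c : ℕ) < blockOff α i + α i then
      (if (r : ℕ) < (c : ℕ) then 1 else if (c : ℕ) < (r : ℕ) then -1 else 0)
    else 0

/-- `W_α = (1/(2N)) ⊕_i (U_{α_i} - U_{α_i}ᵀ) + (1/(2N²)) 𝟙_{m×m}`. -/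
noncomputable def Wmat {N : ℕ} (α : Fin N → ℕ) (m : ℕ) : Matrix (Fin m) (Fin m) ℝ :=
  (1 / (2 * (N : ℝ))) • blockSkew α m + (1 / (2 * (N : ℝ) ^ 2)) • Jmat m

/-! ### Auxiliary lemmas -/

lemma altS (n : ℕ) : ∑ q ∈ Finset.range n, (-1:ℝ)^q = if Even n then 0 else 1 := by
  induction n with
  | zero => simp
  | succ n ih =>
    rw [Finset.sum_range_succ, ih]
    rcases Nat.even_or_odd n with h | h
    · simp [h, Nat.even_add_one, h.neg_one_pow, Nat.not_even_iff_odd]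
    · simp [Nat.even_add_one, Nat.not_even_iff_odd.2 h, h.neg_one_pow]

lemma signSum1 (a p : ℕ) (ha : Even a) (hp : p < a) :
    ∑ q ∈ Finset.range a,
      (if p < q then (1:ℝ) else if q < p then -1 else 0) * (-1)^q = -1 := by
  have key : ∀ q ∈ Finset.range a,
      (if p < q then (1:ℝ) else if q < p then -1 else 0) * (-1)^q
      = (if q ∈ Finset.Ico (p+1) a then ((-1:ℝ))^q else 0)
        - (if q ∈ Finset.range p then ((-1:ℝ))^q else 0) := by
    intro q hq
    simp only [Finset.mem_Ico, Finset.mem_range] at *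
    split_ifs <;> first | ring1 | omega
  rw [Finset.sum_congr rfl key, Finset.sum_sub_distrib,
      Finset.sum_ite_mem, Finset.sum_ite_mem]
  have h1 : Finset.range a ∩ Finset.Ico (p+1) a = Finset.Ico (p+1) a := by
    ext q; simp only [Finset.mem_inter, Finset.mem_range, Finset.mem_Ico]; omega
  have h2 : Finset.range a ∩ Finset.range p = Finset.range p := by
    ext q; simp only [Finset.mem_inter, Finset.mem_range]; omega
  rw [h1, h2, Finset.sum_Ico_eq_sub _ (by omega : p + 1 ≤ a),
      altS, altS, altS]
  by_cases h : Even p <;> simp [ha, h, Nat.even_add_one] <;> norm_num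

lemma signSum2 (a p p' : ℕ) (ha : Even a) (hp : p < a) (hp' : p' < a) :
    ∑ q ∈ Finset.range a,
      (if p < q then (1:ℝ) else if q < p then -1 else 0) * (-1)^q *
      (if q < p' then (1:ℝ) else if p' < q then -1 else 0)
    = if p = p' then (-1)^p else 0 := by
  rcases eq_or_ne p p' with rfl | hne
  · have key : ∀ q ∈ Finset.range a,
        (if p < q then (1:ℝ) else if q < p then -1 else 0) * (-1)^q *
          (if q < p then (1:ℝ) else if p < q then -1 else 0)
        = -((-1:ℝ))^q + (if q = p then ((-1:ℝ))^p else 0) := by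
      intro q hq
      rcases eq_or_ne q p with rfl | hqp
      · simp
      · rw [if_neg hqp]
        split_ifs <;> first | ring1 | omega
    rw [Finset.sum_congr rfl key, Finset.sum_add_distrib, Finset.sum_neg_distrib, altS,
        Finset.sum_ite_eq' (Finset.range a) p (fun _ => ((-1:ℝ))^p),
        if_pos (Finset.mem_range.2 hp), if_pos rfl]
    simp [ha]
  · set l := min p p' with hl
    set u := max p p' with hu
    have hlu : l < u := by omega
    have hua : u < a := by omega
    have key : ∀ q ∈ Finset.range a,
        (if p < q then (1:ℝ) else if q < p then -1 else 0) * (-1)^q *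
          (if q < p' then (1:ℝ) else if p' < q then -1 else 0)
        = (if q ∈ Finset.Ioo l u then ((-1:ℝ))^q else 0)
          - (if q ∈ Finset.range l then ((-1:ℝ))^q else 0)
          - (if q ∈ Finset.Ico (u+1) a then ((-1:ℝ))^q else 0) := by
      intro q hq
      simp only [Finset.mem_Ioo, Finset.mem_range, Finset.mem_Ico] at *
      split_ifs <;> first | ring1 | omega
    rw [Finset.sum_congr rfl key, Finset.sum_sub_distrib, Finset.sum_sub_distrib,
        Finset.sum_ite_mem, Finset.sum_ite_mem, Finset.sum_ite_mem]
    have e1 : Finset.range a ∩ Finset.Ioo l u = Finset.Ioo l u := by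
      ext q; simp only [Finset.mem_inter, Finset.mem_range, Finset.mem_Ioo]; omega
    have e2 : Finset.range a ∩ Finset.range l = Finset.range l := by
      ext q; simp only [Finset.mem_inter, Finset.mem_range]; omega
    have e3 : Finset.range a ∩ Finset.Ico (u+1) a = Finset.Ico (u+1) a := by
      ext q; simp only [Finset.mem_inter, Finset.mem_range, Finset.mem_Ico]; omega
    rw [e1, e2, e3, ← Finset.Ico_add_one_left_eq_Ioo l u,
        Finset.sum_Ico_eq_sub _ (by omega : l + 1 ≤ u),
        Finset.sum_Ico_eq_sub _ (by omega : u + 1 ≤ a),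
        altS, altS, altS, altS, altS, if_neg hne]
    by_cases h : Even l <;> by_cases h' : Even u <;>
      simp [ha, h, h', Nat.even_add_one] <;> norm_num

lemma not_mem_filter_lt {N : ℕ} (i : Fin N) :
    i ∉ Finset.univ.filter (fun k => k < i) := by
  simp only [Finset.mem_filter, Finset.mem_univ, true_and]
  exact lt_irrefl i

lemma blockOff_zero {N : ℕ} (α : Fin N → ℕ) (i : Fin N) (hi : (i:ℕ) = 0) :
    blockOff α i = 0 := by
  unfold blockOff
  convert Finset.sum_empty
  ext k
  simp only [Finset.mem_filter, Finset.mem_univ, true_and, Finset.notMem_empty, iff_false,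
    Fin.lt_def]
  omega

lemma blockOff_succ {N : ℕ} (α : Fin N → ℕ) {i j : Fin N} (hj : (j:ℕ) = (i:ℕ) + 1) :
    blockOff α j = blockOff α i + α i := by
  unfold blockOff
  have hset : Finset.univ.filter (fun k => k < j) = insert i (Finset.univ.filter (fun k => k < i)) := by
    ext k
    simp only [Finset.mem_filter, Finset.mem_univ, true_and, Finset.mem_insert, Fin.lt_def,
      Fin.ext_iff]
    omega
  rw [hset, Finset.sum_insert (not_mem_filter_lt _)]
  omega

lemma blockOff_add_le {N : ℕ} (α : Fin N → ℕ) {i j : Fin N} (h : i < j) :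
    blockOff α i + α i ≤ blockOff α j := by
  have h1 : blockOff α i + α i = ∑ k ∈ insert i (Finset.univ.filter (fun k => k < i)), α k := by
    rw [Finset.sum_insert (not_mem_filter_lt _), blockOff]; omega
  rw [h1, blockOff]
  apply Finset.sum_le_sum_of_subset
  intro k hk
  simp only [Finset.mem_insert, Finset.mem_filter, Finset.mem_univ, true_and] at *
  rcases hk with rfl | hk
  · exact h
  · exact hk.trans h

lemma blockOff_add_le_sum {N : ℕ} (α : Fin N → ℕ) (i : Fin N) :
    blockOff α i + α i ≤ ∑ j, α j := by
  have h1 : blockOff α i + α i = ∑ k ∈ insert i (Finset.univ.filter (fun k => k < i)), α k := by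
    rw [Finset.sum_insert (not_mem_filter_lt _), blockOff]; omega
  rw [h1]
  exact Finset.sum_le_sum_of_subset (Finset.subset_univ _)

lemma blockOff_last {N : ℕ} (α : Fin N → ℕ) (i : Fin N) (hi : (i:ℕ) + 1 = N) :
    blockOff α i + α i = ∑ j, α j := by
  have h1 : blockOff α i + α i = ∑ k ∈ insert i (Finset.univ.filter (fun k => k < i)), α k := by
    rw [Finset.sum_insert (not_mem_filter_lt _), blockOff]; omega
  rw [h1]
  congr 1
  ext k
  have hk := k.isLt
  simp only [Finset.mem_insert, Finset.mem_filter, Finset.mem_univ, true_and, iff_true,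
    Fin.lt_def, Fin.ext_iff]
  omega

lemma exists_block {N m : ℕ} (hN : 0 < N) (α : Fin N → ℕ) (hm : ∑ i, α i = m)
    {r : ℕ} (hr : r < m) :
    ∃ i : Fin N, blockOff α i ≤ r ∧ r < blockOff α i + α i := by
  by_contra hcon
  push_neg at hcon
  have key : ∀ n, ∀ i : Fin N, (i:ℕ) ≤ n → blockOff α i + α i ≤ r := by
    intro n
    induction n with
    | zero =>
      intro i hi
      exact hcon i (by rw [blockOff_zero α i (by omega)]; omega)
    | succ n ih =>
      intro i hi
      rcases Nat.lt_or_ge (i:ℕ) (n+1) with h | h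
      · exact ih i (by omega)
      · have hin : (i:ℕ) = n + 1 := by omega
        have hn : n < N := by have := i.isLt; omega
        have hj := blockOff_succ α (i := ⟨n, hn⟩) (j := i) (by simp [hin])
        have h2 := ih ⟨n, hn⟩ (by simp)
        exact hcon i (by omega)
  have h3 := key (N-1) ⟨N-1, by omega⟩ (le_refl _)
  have h4 := blockOff_last α (⟨N-1, by omega⟩ : Fin N) (by simp; omega)
  omega

lemma block_unique {N : ℕ} (α : Fin N → ℕ) {i j : Fin N} {r : ℕ}
    (h1 : blockOff α i ≤ r) (h2 : r < blockOff α i + α i)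
    (h3 : blockOff α j ≤ r) (h4 : r < blockOff α j + α j) : i = j := by
  rcases lt_trichotomy i j with h | h | h
  · have := blockOff_add_le α h; omega
  · exact h
  · have := blockOff_add_le α h; omega

lemma blockOff_even {N : ℕ} (α : Fin N → ℕ) (heven : ∀ i, Even (α i)) (i : Fin N) :
    Even (blockOff α i) :=
  Finset.even_sum _ (fun c _ => heven c)

lemma blockSkew_apply {N m : ℕ} (α : Fin N → ℕ) {i : Fin N} {r : Fin m} (c : Fin m)
    (h1 : blockOff α i ≤ (r:ℕ)) (h2 : (r:ℕ) < blockOff α i + α i) :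
    blockSkew α m r c =
      if blockOff α i ≤ (c:ℕ) ∧ (c:ℕ) < blockOff α i + α i then
        (if (r:ℕ) < (c:ℕ) then (1:ℝ) else if (c:ℕ) < (r:ℕ) then -1 else 0)
      else 0 := by
  unfold blockSkew
  rw [Matrix.of_apply]
  by_cases hc : blockOff α i ≤ (c:ℕ) ∧ (c:ℕ) < blockOff α i + α i
  · rw [if_pos ⟨i, h1, h2, hc.1, hc.2⟩, if_pos hc]
  · rw [if_neg, if_neg hc]
    rintro ⟨i', k1, k2, k3, k4⟩
    have heq : i' = i := block_unique α k1 k2 h1 h2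
    subst heq
    exact hc ⟨k3, k4⟩

lemma sum_block {m : ℕ} (o a : ℕ) (hoa : o + a ≤ m) (f : Fin m → ℝ) (g : ℕ → ℝ)
    (hg : ∀ k : Fin m, f k = g (k:ℕ))
    (hf : ∀ k : Fin m, ((k:ℕ) < o ∨ o + a ≤ (k:ℕ)) → f k = 0) :
    ∑ k : Fin m, f k = ∑ q ∈ Finset.range a, g (o + q) := by
  have step1 : ∑ k : Fin m, f k = ∑ n ∈ Finset.range m, g n := by
    rw [Finset.sum_congr rfl (fun k _ => hg k)]
    exact Fin.sum_univ_eq_sum_range g m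
  have step2 : ∑ q ∈ Finset.range a, g (o + q) = ∑ n ∈ Finset.Ico o (o + a), g n := by
    rw [Finset.sum_Ico_eq_sum_range, show o + a - o = a by omega]
  rw [step1, step2]
  apply (Finset.sum_subset _ _).symm
  · intro x hx
    simp only [Finset.mem_Ico, Finset.mem_range] at *
    omega
  · intro x hx hnx
    simp only [Finset.mem_Ico, Finset.mem_range] at hx hnx
    have hx' : x < m := hx
    have := hf ⟨x, hx'⟩ (by simpa using (by omega : x < o ∨ o + a ≤ x))
    rw [hg ⟨x, hx'⟩] at this
    simpa using this

lemma Jmat_apply (m : ℕ) (r c : Fin m) : Jmat m r c = 1 := rfl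

lemma skew_transpose {N m : ℕ} (α : Fin N → ℕ) :
    (blockSkew α m)ᵀ = - blockSkew α m := by
  ext r c
  simp only [Matrix.transpose_apply, Matrix.neg_apply]
  unfold blockSkew
  simp only [Matrix.of_apply]
  have hiff : (∃ i : Fin N, blockOff α i ≤ (c:ℕ) ∧ (c:ℕ) < blockOff α i + α i ∧
      blockOff α i ≤ (r:ℕ) ∧ (r:ℕ) < blockOff α i + α i)
      ↔ (∃ i : Fin N, blockOff α i ≤ (r:ℕ) ∧ (r:ℕ) < blockOff α i + α i ∧
      blockOff α i ≤ (c:ℕ) ∧ (c:ℕ) < blockOff α i + α i) := by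
    constructor <;> rintro ⟨i, h⟩ <;> exact ⟨i, h.2.2.1, h.2.2.2, h.1, h.2.1⟩
  rw [if_congr hiff rfl rfl]
  split_ifs <;> first | ring1 | omega

lemma QQ (m : ℕ) : Qmat m * Qmat m = 1 := by
  rw [Qmat, Matrix.diagonal_mul_diagonal,
      show (fun i : Fin m => (-1:ℝ)^(i:ℕ) * (-1)^(i:ℕ)) = fun _ => (1:ℝ) from
        funext fun i => by rw [← pow_add]; exact Even.neg_one_pow ⟨(i:ℕ), rfl⟩,
      Matrix.diagonal_one]

lemma Jmat_transpose (m : ℕ) : (Jmat m)ᵀ = Jmat m := rfl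

lemma SQJ {N m : ℕ} (hN : 0 < N) (α : Fin N → ℕ) (heven : ∀ i, Even (α i))
    (hm : ∑ i, α i = m) :
    blockSkew α m * Qmat m * Jmat m = -(Jmat m) := by
  ext r c
  obtain ⟨i, h1, h2⟩ := exists_block hN α hm r.isLt
  set o := blockOff α i with ho
  set a := α i with ha
  have hoa : o + a ≤ m := by
    have := blockOff_add_le_sum α i
    omega
  have hoeven : Even o := blockOff_even α heven i
  rw [Matrix.mul_apply]
  have key : ∑ k : Fin m, (blockSkew α m * Qmat m) r k * Jmat m k c
      = ∑ q ∈ Finset.range a,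
          ((if o ≤ o+q ∧ o+q < o + a then
              (if (r:ℕ) < o+q then (1:ℝ) else if o+q < (r:ℕ) then -1 else 0) else 0)
            * (-1)^(o+q)) := by
    apply sum_block o a hoa _
      (fun n => (if o ≤ n ∧ n < o + a then
          (if (r:ℕ) < n then (1:ℝ) else if n < (r:ℕ) then -1 else 0) else 0) * (-1)^n)
    · intro k
      rw [Qmat, Matrix.mul_diagonal, blockSkew_apply α k h1 h2, Jmat_apply, mul_one]
    · intro k hk
      rw [Qmat, Matrix.mul_diagonal, blockSkew_apply α k h1 h2,
        if_neg (show ¬(o ≤ (k:ℕ) ∧ (k:ℕ) < o + a) by omega), Jmat_apply]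
      ring
  rw [key, Finset.sum_congr rfl (g := fun q =>
      (if (r:ℕ) - o < q then (1:ℝ) else if q < (r:ℕ) - o then -1 else 0) * (-1)^q)
    (fun q hq => by
      rw [Finset.mem_range] at hq
      rw [if_pos (show o ≤ o + q ∧ o + q < o + a by omega), pow_add,
        hoeven.neg_one_pow, one_mul]
      beta_reduce
      split_ifs <;> first | ring1 | omega)]
  rw [signSum1 a ((r:ℕ) - o) (ha ▸ heven i) (by omega)]
  simp [Jmat]

lemma SQS {N m : ℕ} (hN : 0 < N) (α : Fin N → ℕ) (heven : ∀ i, Even (α i))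
    (hm : ∑ i, α i = m) :
    blockSkew α m * Qmat m * blockSkew α m = Qmat m := by
  ext r c
  obtain ⟨i, h1, h2⟩ := exists_block hN α hm r.isLt
  set o := blockOff α i with ho
  set a := α i with ha
  have hoa : o + a ≤ m := by
    have := blockOff_add_le_sum α i
    omega
  have hoeven : Even o := blockOff_even α heven i
  rw [Matrix.mul_apply]
  by_cases hc : o ≤ (c:ℕ) ∧ (c:ℕ) < o + a
  · have key : ∑ k : Fin m, (blockSkew α m * Qmat m) r k * blockSkew α m k c
        = ∑ q ∈ Finset.range a,
            (if o ≤ o+q ∧ o+q < o + a then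
              (if (r:ℕ) < o+q then (1:ℝ) else if o+q < (r:ℕ) then -1 else 0) * (-1)^(o+q) *
              (if o+q < (c:ℕ) then (1:ℝ) else if (c:ℕ) < o+q then -1 else 0)
            else 0) := by
      apply sum_block o a hoa _
        (fun n => if o ≤ n ∧ n < o + a then
            (if (r:ℕ) < n then (1:ℝ) else if n < (r:ℕ) then -1 else 0) * (-1)^n *
            (if n < (c:ℕ) then (1:ℝ) else if (c:ℕ) < n then -1 else 0)
          else 0)
      · intro k
        rw [Qmat, Matrix.mul_diagonal, blockSkew_apply α k h1 h2]
        by_cases hk : o ≤ (k:ℕ) ∧ (k:ℕ) < o + a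
        · rw [if_pos hk, if_pos hk, blockSkew_apply α c hk.1 hk.2, if_pos hc]
        · rw [if_neg hk, if_neg hk]
          ring
      · intro k hk
        rw [Qmat, Matrix.mul_diagonal, blockSkew_apply α k h1 h2,
          if_neg (show ¬(o ≤ (k:ℕ) ∧ (k:ℕ) < o + a) by omega)]
        ring
    rw [key, Finset.sum_congr rfl (g := fun q =>
        (if (r:ℕ) - o < q then (1:ℝ) else if q < (r:ℕ) - o then -1 else 0) * (-1)^q *
        (if q < (c:ℕ) - o then (1:ℝ) else if (c:ℕ) - o < q then -1 else 0))
      (fun q hq => by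
        rw [Finset.mem_range] at hq
        rw [if_pos (show o ≤ o + q ∧ o + q < o + a by omega), pow_add,
          hoeven.neg_one_pow, one_mul]
        beta_reduce
        split_ifs <;> first | ring1 | omega)]
    rw [signSum2 a ((r:ℕ) - o) ((c:ℕ) - o) (ha ▸ heven i) (by omega) (by omega)]
    rcases eq_or_ne r c with rfl | hrc
    · rw [if_pos rfl, Qmat, Matrix.diagonal_apply_eq]
      conv_rhs => rw [show (r:ℕ) = o + ((r:ℕ) - o) by omega]
      rw [pow_add, hoeven.neg_one_pow, one_mul]
    · rw [if_neg (show ¬((r:ℕ) - o = (c:ℕ) - o) by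
        intro h
        apply hrc
        apply Fin.ext
        omega), Qmat, Matrix.diagonal_apply_ne _ hrc]
  · have hz : ∀ k : Fin m, (blockSkew α m * Qmat m) r k * blockSkew α m k c = 0 := by
      intro k
      by_cases hk : o ≤ (k:ℕ) ∧ (k:ℕ) < o + a
      · rw [blockSkew_apply α c hk.1 hk.2, if_neg hc, mul_zero]
      · rw [Qmat, Matrix.mul_diagonal, blockSkew_apply α k h1 h2, if_neg hk]
        ring
    rw [Finset.sum_eq_zero (fun k _ => hz k), Qmat, Matrix.diagonal_apply_ne]
    intro h
    rw [h] at h1 h2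
    exact hc ⟨h1, h2⟩

lemma JQJ {m : ℕ} (hme : Even m) : Jmat m * Qmat m * Jmat m = 0 := by
  ext r c
  rw [Matrix.mul_apply]
  have h : ∀ k : Fin m, (Jmat m * Qmat m) r k * Jmat m k c = (-1:ℝ)^(k:ℕ) := by
    intro k
    rw [Qmat, Matrix.mul_diagonal, Jmat_apply, Jmat_apply, one_mul, mul_one]
  rw [Finset.sum_congr rfl (fun k _ => h k),
      Fin.sum_univ_eq_sum_range (fun n => (-1:ℝ)^n) m, altS, if_pos hme]
  simp

lemma JQS {N m : ℕ} (hN : 0 < N) (α : Fin N → ℕ) (heven : ∀ i, Even (α i))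
    (hm : ∑ i, α i = m) :
    Jmat m * Qmat m * blockSkew α m = Jmat m := by
  have h := congrArg Matrix.transpose (SQJ hN α heven hm)
  rw [Matrix.transpose_mul, Matrix.transpose_mul, Matrix.transpose_neg, Jmat_transpose,
    skew_transpose, Qmat, Matrix.diagonal_transpose, ← Qmat] at h
  rw [← Matrix.mul_assoc] at h
  -- h : Jmat m * Qmat m * (- blockSkew α m) = -(Jmat m)
  rw [Matrix.mul_neg] at h
  exact neg_injective h

/-- For a composition `α` of `m` of length `N` with all entries even, the cosquare of
`W_α` satisfies `W_α⁻ᵀ W_α = -I_m + (2/N) Q_m 𝟙_{m×m}`. -/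
theorem Wmat_cosquare (N m : ℕ) (hN : 0 < N) (α : Fin N → ℕ)
    (hpos : ∀ i, 0 < α i) (heven : ∀ i, Even (α i)) (hm : ∑ i, α i = m) :
    IsUnit (Wmat α m) ∧
      ((Wmat α m)ᵀ)⁻¹ * Wmat α m = -1 + ((2 : ℝ) / (N : ℝ)) • (Qmat m * Jmat m) := by
  have hNR : (N : ℝ) ≠ 0 := Nat.cast_ne_zero.2 hN.ne'
  have hme : Even m := hm ▸ Finset.even_sum _ (fun i _ => heven i)
  set S := blockSkew α m with hS
  set Q := Qmat m with hQ
  set J := Jmat m with hJ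
  have hsqs : S * Q * S = Q := SQS hN α heven hm
  have hsqj : S * Q * J = -J := SQJ hN α heven hm
  have hjqs : J * Q * S = J := JQS hN α heven hm
  have hjqj : J * Q * J = 0 := JQJ hme
  have hqq : Q * Q = 1 := QQ m
  have hW : Wmat α m = (1 / (2 * (N:ℝ))) • S + (1 / (2 * (N:ℝ)^2)) • J := rfl
  have hA : S * (Q * S * Q) = 1 := by
    rw [← Matrix.mul_assoc, ← Matrix.mul_assoc, hsqs, hqq]
  have hB : S * (Q * J * Q) = -(J * Q) := by
    rw [← Matrix.mul_assoc, ← Matrix.mul_assoc, hsqj, Matrix.neg_mul]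
  have hC : J * (Q * S * Q) = J * Q := by
    rw [← Matrix.mul_assoc, ← Matrix.mul_assoc, hjqs]
  have hD : J * (Q * J * Q) = 0 := by
    rw [← Matrix.mul_assoc, ← Matrix.mul_assoc, hjqj, Matrix.zero_mul]
  have hA' : (Q * S * Q) * S = 1 := by
    rw [Matrix.mul_assoc, Matrix.mul_assoc, ← Matrix.mul_assoc S Q S, hsqs, hqq]
  have hB' : (Q * S * Q) * J = -(Q * J) := by
    rw [Matrix.mul_assoc, Matrix.mul_assoc, ← Matrix.mul_assoc S Q J, hsqj, Matrix.mul_neg]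
  have hC' : (Q * J * Q) * S = Q * J := by
    rw [Matrix.mul_assoc, Matrix.mul_assoc, ← Matrix.mul_assoc J Q S, hjqs]
  have hD' : (Q * J * Q) * J = 0 := by
    rw [Matrix.mul_assoc, Matrix.mul_assoc, ← Matrix.mul_assoc J Q J, hjqj, Matrix.mul_zero]
  -- invertibility of W
  have hWV : Wmat α m * ((2 * (N:ℝ)) • (Q * S * Q) + (2:ℝ) • (Q * J * Q)) = 1 := by
    rw [hW]
    simp only [add_mul, mul_add, smul_mul_assoc, mul_smul_comm, neg_smul, neg_mul, mul_neg,
      neg_neg, smul_neg, hA, hB, hC, hD]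
    match_scalars <;> field_simp <;> try ring1
  have hUnit : IsUnit (Wmat α m) := (Matrix.isUnit_iff_isUnit_det _).2 (Matrix.isUnit_det_of_right_inverse hWV)
  -- transpose
  have hWT : (Wmat α m)ᵀ = (-(1 / (2 * (N:ℝ)))) • S + (1 / (2 * (N:ℝ)^2)) • J := by
    rw [hW, Matrix.transpose_add, Matrix.transpose_smul, Matrix.transpose_smul, hS,
      skew_transpose, hJ, Jmat_transpose, smul_neg, neg_smul]
  have hWTV : (Wmat α m)ᵀ * ((-(2 * (N:ℝ))) • (Q * S * Q) + (2:ℝ) • (Q * J * Q)) = 1 := by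
    rw [hWT]
    simp only [add_mul, mul_add, smul_mul_assoc, mul_smul_comm, neg_smul, neg_mul, mul_neg,
      neg_neg, smul_neg, hA, hB, hC, hD]
    match_scalars <;> field_simp <;> try ring1
  have hinv : ((Wmat α m)ᵀ)⁻¹ = (-(2 * (N:ℝ))) • (Q * S * Q) + (2:ℝ) • (Q * J * Q) :=
    Matrix.inv_eq_right_inv hWTV
  refine ⟨hUnit, ?_⟩
  rw [hinv, hW]
  simp only [add_mul, mul_add, smul_mul_assoc, mul_smul_comm, neg_smul, neg_mul, mul_neg,
    neg_neg, smul_neg, hA', hB', hC', hD']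
  match_scalars <;> field_simp <;> try ring1
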